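/- Let [S:T] be a k×2 matrix and consider the joint action of g₁ ∈ GL(k) on data (R₀, Ω₀, Φ) (Kronecker covariance Σ₀ = Ω₀ ⊗ Φ, Φ known but transforming as g₁Φg₁') together with the sign action of g₂ on (S,T) given by (S,T) ↦ (sgn(g₁₁)S, sgn(g₂₂)T). Then the triple (Q_S, Q_T, Q_{ST}²) = (S'S, T'T, (S'T)²) is a maximal invariant: (S,T) and (S̃,T̃) lie in the same orbit if and only if S'S = S̃'S̃, T'T = T̃'T̃, and (S'T)² = (S̃'T̃)². -/

import Mathlib

open Matrix

open scoped RealInnerProductSpace in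
/-- If two pairs of vectors in a Euclidean space have the same Gram matrix, there is a
linear isometry equivalence taking one pair to the other. -/
lemma exists_isometry_of_gram_eq (k : ℕ) (u v u' v' : EuclideanSpace ℝ (Fin k))
    (huu : ⟪u, u⟫ = ⟪u', u'⟫) (hvv : ⟪v, v⟫ = ⟪v', v'⟫) (huv : ⟪u, v⟫ = ⟪u', v'⟫) :
    ∃ f : EuclideanSpace ℝ (Fin k) ≃ₗᵢ[ℝ] EuclideanSpace ℝ (Fin k), f u = u' ∧ f v = v' := by
  have hnu : ‖u‖ = ‖u'‖ := by
    have := huu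
    rw [real_inner_self_eq_norm_sq, real_inner_self_eq_norm_sq] at this
    exact (sq_eq_sq₀ (norm_nonneg _) (norm_nonneg _)).mp this
  set r1 : EuclideanSpace ℝ (Fin k) ≃ₗᵢ[ℝ] EuclideanSpace ℝ (Fin k) :=
    Submodule.reflection (Submodule.span ℝ {u - u'})ᗮ with hr1
  have hr1u : r1 u = u' := Submodule.reflection_sub hnu
  set w : EuclideanSpace ℝ (Fin k) := r1 v with hw
  have hww : ⟪w, w⟫ = ⟪v', v'⟫ := by
    rw [hw, LinearIsometryEquiv.inner_map_map]; exact hvv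
  have hnw : ‖w‖ = ‖v'‖ := by
    rw [real_inner_self_eq_norm_sq, real_inner_self_eq_norm_sq] at hww
    exact (sq_eq_sq₀ (norm_nonneg _) (norm_nonneg _)).mp hww
  have huw : ⟪u', w⟫ = ⟪u', v'⟫ := by
    have h1 : ⟪u', w⟫ = ⟪u, v⟫ := by
      rw [hw, ← hr1u, LinearIsometryEquiv.inner_map_map]
    rw [h1, huv]
  set r2 : EuclideanSpace ℝ (Fin k) ≃ₗᵢ[ℝ] EuclideanSpace ℝ (Fin k) :=
    Submodule.reflection (Submodule.span ℝ {w - v'})ᗮ with hr2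
  have hr2w : r2 w = v' := Submodule.reflection_sub hnw
  have hr2u : r2 u' = u' := by
    apply Submodule.reflection_mem_subspace_eq_self
    rw [Submodule.mem_orthogonal_singleton_iff_inner_right, inner_sub_left]
    linarith [real_inner_comm u' w, real_inner_comm w u', real_inner_comm u' v',
      real_inner_comm v' u', huw]
  exact ⟨r1.trans r2, by simp [hr1u, hr2u], by simp [← hw, hr2w]⟩

open scoped RealInnerProductSpace in
lemma euclidean_inner_eq_dot (k : ℕ) (x y : EuclideanSpace ℝ (Fin k)) :
    ⟪x, y⟫ = (x : Fin k → ℝ) ⬝ᵥ (y : Fin k → ℝ) := by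
  rw [PiLp.inner_apply]
  simp [dotProduct, mul_comm]

/-- `(Q_S, Q_T, Q_{ST}²) = (S'S, T'T, (S'T)²)` is a maximal invariant for the group generated
by joint orthogonal rotations `(S,T) ↦ (hS, hT)` and independent sign changes
`(S,T) ↦ (ε₁S, ε₂T)`, `ε₁, ε₂ ∈ {−1,+1}`: two pairs lie in the same orbit iff
`S'S = S̃'S̃`, `T'T = T̃'T̃`, and `(S'T)² = (S̃'T̃)²`. -/
theorem sign_orthogonal_maximal_invariant (k : ℕ) (hk : 2 ≤ k)
    (S T Stil Ttil : Fin k → ℝ) :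
    (∃ (h : Matrix (Fin k) (Fin k) ℝ) (ε₁ ε₂ : ℝ), hᵀ * h = 1 ∧
        (ε₁ = 1 ∨ ε₁ = -1) ∧ (ε₂ = 1 ∨ ε₂ = -1) ∧
        Stil = ε₁ • (h *ᵥ S) ∧ Ttil = ε₂ • (h *ᵥ T))
      ↔ (S ⬝ᵥ S = Stil ⬝ᵥ Stil ∧ T ⬝ᵥ T = Ttil ⬝ᵥ Ttil ∧
          (S ⬝ᵥ T) ^ 2 = (Stil ⬝ᵥ Ttil) ^ 2) := by
  constructor
  · rintro ⟨h, ε₁, ε₂, horth, hε₁, hε₂, hS, hT⟩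
    have key : ∀ x y : Fin k → ℝ, (h *ᵥ x) ⬝ᵥ (h *ᵥ y) = x ⬝ᵥ y := by
      intro x y
      rw [Matrix.dotProduct_mulVec, ← Matrix.vecMul_transpose, Matrix.vecMul_vecMul,
        horth, Matrix.vecMul_one]
    have he₁ : ε₁ * ε₁ = 1 := by rcases hε₁ with h' | h' <;> rw [h'] <;> ring
    have he₂ : ε₂ * ε₂ = 1 := by rcases hε₂ with h' | h' <;> rw [h'] <;> ring
    refine ⟨?_, ?_, ?_⟩
    · rw [hS, smul_dotProduct, dotProduct_smul, key, smul_smul, he₁, one_smul]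
    · rw [hT, smul_dotProduct, dotProduct_smul, key, smul_smul, he₂, one_smul]
    · rw [hS, hT, smul_dotProduct, dotProduct_smul, key]
      rcases hε₁ with h1 | h1 <;> rcases hε₂ with h2 | h2 <;> rw [h1, h2] <;>
        simp [smul_eq_mul] <;> ring
  · rintro ⟨hSS, hTT, hST⟩
    have hsq : S ⬝ᵥ T = Stil ⬝ᵥ Ttil ∨ S ⬝ᵥ T = -(Stil ⬝ᵥ Ttil) :=
      sq_eq_sq_iff_eq_or_eq_neg.mp hST
    obtain ⟨ε₂, hε₂, hdot⟩ : ∃ ε₂ : ℝ, (ε₂ = 1 ∨ ε₂ = -1) ∧ S ⬝ᵥ T = ε₂ * (Stil ⬝ᵥ Ttil) := by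
      rcases hsq with h' | h'
      · exact ⟨1, Or.inl rfl, by rw [h']; ring⟩
      · exact ⟨-1, Or.inr rfl, by rw [h']; ring⟩
    have he₂ : ε₂ * ε₂ = 1 := by rcases hε₂ with h' | h' <;> rw [h'] <;> ring
    obtain ⟨f, hfu, hfv⟩ := exists_isometry_of_gram_eq k (WithLp.toLp 2 S) (WithLp.toLp 2 T) (WithLp.toLp 2 Stil) (WithLp.toLp 2 (ε₂ • Ttil))
      (by rw [euclidean_inner_eq_dot, euclidean_inner_eq_dot]; exact hSS)
      (by rw [euclidean_inner_eq_dot, euclidean_inner_eq_dot]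
          show T ⬝ᵥ T = (ε₂ • Ttil) ⬝ᵥ (ε₂ • Ttil)
          rw [smul_dotProduct, dotProduct_smul, smul_smul, he₂, one_smul]
          exact hTT)
      (by rw [euclidean_inner_eq_dot, euclidean_inner_eq_dot]
          show S ⬝ᵥ T = Stil ⬝ᵥ (ε₂ • Ttil)
          rw [dotProduct_smul, hdot, smul_eq_mul])
    set L : (Fin k → ℝ) →ₗ[ℝ] (Fin k → ℝ) :=
      ((WithLp.linearEquiv 2 ℝ (Fin k → ℝ)).symm.trans
        (f.toLinearEquiv.trans (WithLp.linearEquiv 2 ℝ (Fin k → ℝ)))).toLinearMap with hL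
    have hLapp : ∀ x : Fin k → ℝ, L x = (f (WithLp.toLp 2 x) : Fin k → ℝ) := fun x => rfl
    set M : Matrix (Fin k) (Fin k) ℝ := LinearMap.toMatrix' L with hM
    have hMv : ∀ x : Fin k → ℝ, M *ᵥ x = (f (WithLp.toLp 2 x) : Fin k → ℝ) := by
      intro x
      rw [hM, ← Matrix.toLin'_apply, Matrix.toLin'_toMatrix']
      exact hLapp x
    refine ⟨M, 1, ε₂, ?_, Or.inl rfl, hε₂, ?_, ?_⟩
    · ext i j
      have hcol : ∀ j l, M l j = (M *ᵥ Pi.single j 1) l := by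
        intro j l; rw [Matrix.mulVec_single]; simp
      have : (Mᵀ * M) i j = (M *ᵥ Pi.single i 1) ⬝ᵥ (M *ᵥ Pi.single j 1) := by
        simp only [Matrix.mul_apply, dotProduct, Matrix.transpose_apply]
        exact Finset.sum_congr rfl fun l _ => by rw [← hcol, ← hcol]
      rw [this, hMv, hMv, ← euclidean_inner_eq_dot, LinearIsometryEquiv.inner_map_map,
        euclidean_inner_eq_dot]
      rcases eq_or_ne i j with hij | hij
      · subst hij
        simp [Matrix.one_apply, dotProduct, Pi.single_apply]
      · simp only [Matrix.one_apply, hij, if_false, dotProduct, Pi.single_apply]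
        simp [hij, Ne.symm hij]
    · rw [hMv, hfu, one_smul]
    · rw [hMv, hfv]
      show Ttil = ε₂ • (ε₂ • Ttil)
      rw [smul_smul, he₂, one_smul]
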